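/- arXiv:2305.08469 — 4 statements merged into one kernel-verified Lean document; each statement's English description precedes it below -/
import Mathlib

section
/- Let d, n be positive integers, let Z ∈ ℝ^{d×n}, and let W : ℝ^{d×n} → ℝ be twice continuously differentiable with W(F) ≥ 0 for all F ∈ ℝ^{d×n} and W(R·Z) = 0 for every R ∈ SO(d). Then the Hessian ℍ := D²W(Z) annihilates infinitesimal rotations of Z: for every skew-symmetric S ∈ ℝ^{d×d} and every F ∈ ℝ^{d×n}, D²W(Z)(S·Z, F) = 0, where S·Z denotes the matrix product and D²W(Z) is the second Fréchet derivative of W at Z viewed as a bilinear form on ℝ^{d×n}. -/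
open Matrix

attribute [local instance] Matrix.frobeniusNormedAddCommGroup Matrix.frobeniusNormedSpace

attribute [local instance] Matrix.frobeniusNormedRing Matrix.frobeniusNormedAlgebra

/-- The Hessian `D²W(Z)` of the cell energy annihilates infinitesimal rotations of `Z`:
for every skew-symmetric `S` and every `F`, `D²W(Z)(S·Z, F) = 0`. -/
theorem hessian_annihilates_infinitesimal_rotations
    (d n : ℕ) (hd : 0 < d) (hn : 0 < n)
    (Z : Matrix (Fin d) (Fin n) ℝ) (W : Matrix (Fin d) (Fin n) ℝ → ℝ)
    (hW : ContDiff ℝ 2 W)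
    (hWnonneg : ∀ F : Matrix (Fin d) (Fin n) ℝ, 0 ≤ W F)
    (hWrot : ∀ R : Matrix (Fin d) (Fin d) ℝ, Rᵀ * R = 1 → R.det = 1 → W (R * Z) = 0) :
    ∀ S : Matrix (Fin d) (Fin d) ℝ, S + Sᵀ = 0 →
      ∀ F : Matrix (Fin d) (Fin n) ℝ,
        fderiv ℝ (fderiv ℝ W) Z (S * Z) F = 0 := by
  intro S hS F
  have hST : Sᵀ = -S := by
    have := eq_neg_of_add_eq_zero_right hS
    simpa using this.symm ▸ rfl
  -- the curve of rotations
  set e : ℝ → Matrix (Fin d) (Fin d) ℝ := fun t => NormedSpace.exp (t • S) with he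
  -- orthogonality of exp(tS)
  have horth : ∀ t : ℝ, (e t)ᵀ * e t = 1 := by
    intro t
    have h1 : (e t)ᵀ = NormedSpace.exp (-(t • S)) := by
      rw [he, ← Matrix.exp_transpose, transpose_smul, hST, smul_neg]
    rw [h1]
    show NormedSpace.exp (-(t • S)) * NormedSpace.exp (t • S) = 1
    rw [← Matrix.exp_add_of_commute (-(t • S)) (t • S) ((Commute.refl (t • S)).neg_left)]
    simp [NormedSpace.exp_zero]
  -- continuity of t ↦ e t
  have hecont : Continuous e := by
    rw [continuous_iff_continuousAt]
    intro t
    exact (hasDerivAt_exp_smul_const (𝕂 := ℝ) S t).continuousAt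
  -- det of e t squares to one
  have hdetsq : ∀ t : ℝ, (e t).det * (e t).det = 1 := by
    intro t
    have := congrArg Matrix.det (horth t)
    rwa [Matrix.det_mul, Matrix.det_transpose, Matrix.det_one] at this
  -- det of e t is one
  have hdet : ∀ t : ℝ, (e t).det = 1 := by
    intro t
    rcases mul_self_eq_one_iff.mp (hdetsq t) with h | h
    · exact h
    · exfalso
      have hf : Continuous fun t => (e t).det := hecont.matrix_det
      have h0 : (e 0).det = 1 := by simp [he, NormedSpace.exp_zero]
      have hmem : (0 : ℝ) ∈ Set.uIcc ((e 0).det) ((e t).det) := by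
        rw [h0, h]
        rw [Set.mem_uIcc]
        right; constructor <;> norm_num
      obtain ⟨s, _, hs⟩ := intermediate_value_uIcc (hf.continuousOn) hmem
      have hs' : (e s).det = 0 := hs
      have := hdetsq s
      rw [hs'] at this
      norm_num at this
  -- the curve in matrix space
  set c : ℝ → Matrix (Fin d) (Fin n) ℝ := fun t => e t * Z with hc
  -- W vanishes along c, hence each c t is a global minimum
  have hmin : ∀ t : ℝ, fderiv ℝ W (c t) = 0 := by
    intro t
    have hW0 : W (c t) = 0 := hWrot (e t) (horth t) (hdet t)
    have : IsLocalMin W (c t) := by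
      apply Filter.Eventually.of_forall
      intro x
      rw [hW0]
      exact hWnonneg x
    exact this.fderiv_eq_zero
  -- right-multiplication by Z as a continuous linear map
  let L : Matrix (Fin d) (Fin d) ℝ →ₗ[ℝ] Matrix (Fin d) (Fin n) ℝ :=
    { toFun := fun A => A * Z
      map_add' := fun A B => Matrix.add_mul A B Z
      map_smul' := fun r A => Matrix.smul_mul r A Z }
  -- derivative of c at 0 is S * Z
  have hc0 : HasDerivAt c (S * Z) 0 := by
    have h1 : HasDerivAt e S 0 := by
      have := hasDerivAt_exp_smul_const (𝕂 := ℝ) S (0 : ℝ)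
      simp only [zero_smul, NormedSpace.exp_zero, one_mul] at this
      exact this
    have h2 := (L.toContinuousLinearMap.hasFDerivAt (x := e 0)).comp_hasDerivAt 0 h1
    exact h2
  -- fderiv W is differentiable at Z
  have hcz : c 0 = Z := by simp [hc, he, NormedSpace.exp_zero]
  letI : NormedAddCommGroup (Matrix (Fin d) (Fin n) ℝ →L[ℝ] ℝ) := ContinuousLinearMap.toNormedAddCommGroup
  letI : NormedSpace ℝ (Matrix (Fin d) (Fin n) ℝ →L[ℝ] ℝ) := ContinuousLinearMap.toNormedSpace
  have hC1 : ContDiff ℝ 1 (fderiv ℝ W) := hW.fderiv_right (by norm_num)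
  have hD : HasFDerivAt (fderiv ℝ W) (fderiv ℝ (fderiv ℝ W) Z) (c 0) := by
    rw [hcz]
    exact (hC1.differentiable one_ne_zero Z).hasFDerivAt
  -- compose
  have hg : HasDerivAt (fun t => fderiv ℝ W (c t)) (fderiv ℝ (fderiv ℝ W) Z (S * Z)) 0 :=
    hD.comp_hasDerivAt 0 hc0
  have hg0 : HasDerivAt (fun t => fderiv ℝ W (c t))
      (0 : Matrix (Fin d) (Fin n) ℝ →L[ℝ] ℝ) 0 := by
    have : (fun t => fderiv ℝ W (c t)) = fun _ : ℝ => (0 : Matrix (Fin d) (Fin n) ℝ →L[ℝ] ℝ) := by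
      funext t; exact hmin t
    rw [this]
    exact hasDerivAt_const 0 0
  have : fderiv ℝ (fderiv ℝ W) Z (S * Z) = 0 := hg.unique hg0
  rw [this]
  rfl
end

section
/- Let d, n be positive integers, let Z ∈ ℝ^{d×n}, and let W : ℝ^{d×n} → ℝ be twice continuously differentiable with W(F) ≥ 0 for all F ∈ ℝ^{d×n} and W(R·Z) = 0 for every R ∈ SO(d). Then for all matrices G, H ∈ ℝ^{d×d}, D²W(Z)(G·Z, H·Z) = D²W(Z)(Gˢ·Z, Hˢ·Z), where Aˢ := (A + Aᵀ)/2 denotes the symmetric part of a square matrix A. (In tensor notation, this expresses that the quadratic form G : ℂ : H with ℂ = Z·ℍᵗ·Zᵀ, ℍ = D²W(Z), only depends on the symmetric parts of G and H, i.e., the minor and major symmetry of the elasticity tensor ℂ.) -/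
open Matrix

attribute [local instance] Matrix.frobeniusNormedAddCommGroup Matrix.frobeniusNormedSpace
attribute [local instance] Matrix.frobeniusNormedRing Matrix.frobeniusNormedAlgebra

open NormedSpace in
/-- For skew-symmetric `A`, `exp (t • A)` is in `SO(d)`, hence `W (exp (t•A) * Z) = 0` and
each `exp (t•A) * Z` is a global minimum of `W`, so `fderiv ℝ W (exp (t•A) * Z) = 0`;
differentiating this identity at `t = 0` gives `D²W(Z)(A·Z, ·) = 0`. -/
lemma hessian_skew_zero
    (d n : ℕ)
    (Z : Matrix (Fin d) (Fin n) ℝ) (W : Matrix (Fin d) (Fin n) ℝ → ℝ)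
    (hW : ContDiff ℝ 2 W)
    (hWnonneg : ∀ F : Matrix (Fin d) (Fin n) ℝ, 0 ≤ W F)
    (hWrot : ∀ R : Matrix (Fin d) (Fin d) ℝ, Rᵀ * R = 1 → R.det = 1 → W (R * Z) = 0)
    (A : Matrix (Fin d) (Fin d) ℝ) (hA : Aᵀ = -A) :
    fderiv ℝ (fderiv ℝ W) Z (A * Z) = 0 := by
  -- `exp (t • A)` is orthogonal
  have horth : ∀ t : ℝ, (exp (t • A))ᵀ * exp (t • A) = 1 := by
    intro t
    have h1 : (exp (t • A))ᵀ = exp (-(t • A)) := by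
      rw [← Matrix.exp_transpose, transpose_smul, hA, smul_neg]
    rw [h1, ← Matrix.exp_add_of_commute (-(t • A)) (t • A) (Commute.neg_left rfl), neg_add_cancel, exp_zero]
  -- its determinant squares to 1
  have hsq : ∀ t : ℝ, (exp (t • A)).det ^ 2 = 1 := by
    intro t
    have h := congrArg Matrix.det (horth t)
    rwa [Matrix.det_mul, Matrix.det_transpose, ← sq, Matrix.det_one] at h
  have hcont : Continuous fun t : ℝ => (exp (t • A)).det :=
    Continuous.matrix_det (exp_continuous.comp (continuous_id.smul continuous_const))
  have h0 : (exp ((0 : ℝ) • A)).det = 1 := by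
    rw [zero_smul, exp_zero, Matrix.det_one]
  -- by connectedness, the determinant is identically 1
  have hdet : ∀ t : ℝ, (exp (t • A)).det = 1 := by
    intro t
    rcases sq_eq_one_iff.mp (hsq t) with h | h
    · exact h
    · exfalso
      have hmem : (0 : ℝ) ∈ Set.uIcc ((fun t : ℝ => (exp (t • A)).det) 0)
          ((fun t : ℝ => (exp (t • A)).det) t) := by
        simp only [h0, h, Set.mem_uIcc]
        norm_num
      obtain ⟨s, -, hs⟩ := intermediate_value_uIcc hcont.continuousOn hmem
      have hs' : (exp (s • A)).det = 0 := hs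
      have := hsq s
      rw [hs'] at this
      norm_num at this
  -- each `exp (t•A) * Z` is a global minimum of `W`
  have hWz : ∀ t : ℝ, W (exp (t • A) * Z) = 0 := fun t => hWrot _ (horth t) (hdet t)
  have hDW : ∀ t : ℝ, fderiv ℝ W (exp (t • A) * Z) = 0 := by
    intro t
    apply IsLocalMin.fderiv_eq_zero
    exact Filter.Eventually.of_forall fun F => (hWz t) ▸ hWnonneg F
  -- differentiate `t ↦ fderiv ℝ W (exp (t•A) * Z)` at `t = 0`
  have hΦdiff : DifferentiableAt ℝ (fderiv ℝ W) Z :=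
    ((hW.fderiv_right (m := 1) (by norm_num)).differentiable one_ne_zero).differentiableAt
  have hexp : HasDerivAt (fun t : ℝ => exp (t • A)) A 0 := by
    have h := hasDerivAt_exp_smul_const (𝕂 := ℝ) A 0
    rwa [zero_smul, exp_zero, one_mul] at h
  let L : Matrix (Fin d) (Fin d) ℝ →L[ℝ] Matrix (Fin d) (Fin n) ℝ :=
    LinearMap.toContinuousLinearMap
      { toFun := fun M => M * Z
        map_add' := fun a b => Matrix.add_mul a b Z
        map_smul' := fun r a => Matrix.smul_mul r a Z }
  have hc : HasDerivAt (fun t : ℝ => exp (t • A) * Z) (A * Z) 0 :=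
    L.hasFDerivAt.comp_hasDerivAt 0 hexp
  have hZ0 : exp ((0 : ℝ) • A) * Z = Z := by rw [zero_smul, exp_zero, Matrix.one_mul]
  have hΦat : HasFDerivAt (fderiv ℝ W) (fderiv ℝ (fderiv ℝ W) Z) (exp ((0 : ℝ) • A) * Z) := by
    rw [hZ0]; exact hΦdiff.hasFDerivAt
  letI : NormedAddCommGroup (Matrix (Fin d) (Fin n) ℝ →L[ℝ] ℝ) :=
    ContinuousLinearMap.toNormedAddCommGroup
  letI : NormedSpace ℝ (Matrix (Fin d) (Fin n) ℝ →L[ℝ] ℝ) :=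
    ContinuousLinearMap.toNormedSpace
  have hcomp : HasDerivAt (fun t : ℝ => fderiv ℝ W (exp (t • A) * Z))
      (fderiv ℝ (fderiv ℝ W) Z (A * Z)) 0 := hΦat.comp_hasDerivAt 0 hc
  have hfun : (fun t : ℝ => fderiv ℝ W (exp (t • A) * Z))
      = fun _ : ℝ => (0 : Matrix (Fin d) (Fin n) ℝ →L[ℝ] ℝ) := funext fun t => hDW t
  rw [hfun] at hcomp
  exact hcomp.unique (hasDerivAt_const 0 0)

/-- The quadratic form `G : ℂ : H` associated with the Hessian `ℍ = D²W(Z)` only depends on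
the symmetric parts of `G` and `H`:
`D²W(Z)(G·Z, H·Z) = D²W(Z)(Gˢ·Z, Hˢ·Z)` where `Aˢ = (A + Aᵀ)/2`. -/
theorem hessian_quadratic_form_symmetric_parts
    (d n : ℕ) (hd : 0 < d) (hn : 0 < n)
    (Z : Matrix (Fin d) (Fin n) ℝ) (W : Matrix (Fin d) (Fin n) ℝ → ℝ)
    (hW : ContDiff ℝ 2 W)
    (hWnonneg : ∀ F : Matrix (Fin d) (Fin n) ℝ, 0 ≤ W F)
    (hWrot : ∀ R : Matrix (Fin d) (Fin d) ℝ, Rᵀ * R = 1 → R.det = 1 → W (R * Z) = 0) :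
    ∀ G H : Matrix (Fin d) (Fin d) ℝ,
      fderiv ℝ (fderiv ℝ W) Z (G * Z) (H * Z)
        = fderiv ℝ (fderiv ℝ W) Z ((((1 : ℝ) / 2) • (G + Gᵀ)) * Z)
            ((((1 : ℝ) / 2) • (H + Hᵀ)) * Z) := by
  intro G H
  have hΦdiff : DifferentiableAt ℝ (fderiv ℝ W) Z :=
    ((hW.fderiv_right (m := 1) (by norm_num)).differentiable one_ne_zero).differentiableAt
  have hsymm : ∀ v w, fderiv ℝ (fderiv ℝ W) Z v w = fderiv ℝ (fderiv ℝ W) Z w v :=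
    second_derivative_symmetric
      (fun y => ((hW.differentiable (by norm_num)) y).hasFDerivAt)
      hΦdiff.hasFDerivAt
  have hGskew : ((((1 : ℝ) / 2) • (G - Gᵀ))ᵀ) = -(((1 : ℝ) / 2) • (G - Gᵀ)) := by
    rw [transpose_smul, transpose_sub, transpose_transpose]; module
  have hHskew : ((((1 : ℝ) / 2) • (H - Hᵀ))ᵀ) = -(((1 : ℝ) / 2) • (H - Hᵀ)) := by
    rw [transpose_smul, transpose_sub, transpose_transpose]; module
  have zG := hessian_skew_zero d n Z W hW hWnonneg hWrot _ hGskew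
  have zH := hessian_skew_zero d n Z W hW hWnonneg hWrot _ hHskew
  have hGdecomp : G * Z
      = (((1 : ℝ) / 2) • (G + Gᵀ)) * Z + (((1 : ℝ) / 2) • (G - Gᵀ)) * Z := by
    rw [← Matrix.add_mul]; congr 1; module
  have hHdecomp : H * Z
      = (((1 : ℝ) / 2) • (H + Hᵀ)) * Z + (((1 : ℝ) / 2) • (H - Hᵀ)) * Z := by
    rw [← Matrix.add_mul]; congr 1; module
  have hcross : fderiv ℝ (fderiv ℝ W) Z ((((1 : ℝ) / 2) • (G + Gᵀ)) * Z)
      ((((1 : ℝ) / 2) • (H - Hᵀ)) * Z) = 0 := by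
    rw [hsymm, zH]; rfl
  rw [hGdecomp, hHdecomp]
  simp only [map_add, ContinuousLinearMap.add_apply, zG, ContinuousLinearMap.zero_apply,
    add_zero, zero_add, hcross]
end

section
/- Converse direction of the energy-dissipation-inertia principle. Let H be a finite-dimensional real inner product space, let I : H → ℝ be continuously differentiable, let ρ ≥ 0, ν > 0, T > 0, and let u : ℝ → H be twice continuously differentiable. Suppose the energy-dissipation-inertia equality holds at time T: (ρ/2)‖u'(T)‖² + I(u(T)) + (ν/2)∫₀ᵀ ‖u'(s)‖² ds + (1/(2ν))∫₀ᵀ ‖ρ·u''(s) + ∇I(u(s))‖² ds = (ρ/2)‖u'(0)‖² + I(u(0)). Then u solves the equation of motion: ρ·u''(t) + ν·u'(t) + ∇I(u(t)) = 0 for all t ∈ [0,T]. -/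
open MeasureTheory intervalIntegral Set
open scoped RealInnerProductSpace

private lemma aux_eqzero_of_integral_zero {f : ℝ → ℝ} (hf : Continuous f)
    (hnn : ∀ s, 0 ≤ f s) {T : ℝ} (hT : 0 < T)
    (hint : (∫ s in (0:ℝ)..T, f s) = 0) : ∀ t ∈ Set.Icc (0:ℝ) T, f t = 0 := by
  intro t ht
  by_contra hft
  have hpos : 0 < f t := lt_of_le_of_ne (hnn t) (Ne.symm hft)
  obtain ⟨δ, hδ, hball⟩ := Metric.continuousAt_iff.mp hf.continuousAt (f t / 2) (by positivity)
  set c := max 0 (t - δ/2) with hc_def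
  set d := min T (t + δ/2) with hd_def
  have hc0 : (0:ℝ) ≤ c := le_max_left _ _
  have hct : c ≤ t := max_le ht.1 (by linarith)
  have htd : t ≤ d := le_min ht.2 (by linarith)
  have hdT : d ≤ T := min_le_left _ _
  have hcd : c < d := by
    rcases lt_or_eq_of_le ht.2 with h | h
    · exact lt_of_le_of_lt hct (lt_min h (by linarith))
    · have h0t : 0 < t := h ▸ hT
      exact lt_of_lt_of_le (max_lt h0t (by linarith)) htd
  have hc2 : t - δ/2 ≤ c := le_max_right _ _
  have hd2 : d ≤ t + δ/2 := min_le_right _ _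
  have hposIoo : ∀ x ∈ Set.Ioo c d, 0 < f x := by
    intro x hx
    have hdist : dist x t < δ := by
      rw [Real.dist_eq, abs_lt]
      constructor <;> [nlinarith [hx.1, hx.2]; nlinarith [hx.1, hx.2]]
    have := hball hdist
    rw [Real.dist_eq, abs_lt] at this
    linarith [this.1]
  have i0c : IntervalIntegrable f volume 0 c := hf.intervalIntegrable _ _
  have icd : IntervalIntegrable f volume c d := hf.intervalIntegrable _ _
  have i0d : IntervalIntegrable f volume 0 d := hf.intervalIntegrable _ _
  have idT : IntervalIntegrable f volume d T := hf.intervalIntegrable _ _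
  have hsplit : (∫ s in (0:ℝ)..T, f s)
      = (∫ s in (0:ℝ)..c, f s) + (∫ s in c..d, f s) + (∫ s in d..T, f s) := by
    rw [intervalIntegral.integral_add_adjacent_intervals i0c icd,
      intervalIntegral.integral_add_adjacent_intervals i0d idT]
  have h1 : 0 ≤ ∫ s in (0:ℝ)..c, f s :=
    intervalIntegral.integral_nonneg hc0 (fun x _ => hnn x)
  have h2 : 0 < ∫ s in c..d, f s :=
    intervalIntegral.intervalIntegral_pos_of_pos_on icd hposIoo hcd
  have h3 : 0 ≤ ∫ s in d..T, f s :=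
    intervalIntegral.integral_nonneg hdT (fun x _ => hnn x)
  rw [hsplit] at hint
  linarith

/-- Converse direction of the energy-dissipation-inertia principle:
if the energy-dissipation-inertia equality holds at time `T`, then `u` solves the
equation of motion `ρ u'' + ν u' + ∇I(u) = 0` on `[0,T]`. -/
theorem equation_of_motion_of_energy_dissipation_inertia_equality
    {H : Type*} [NormedAddCommGroup H] [InnerProductSpace ℝ H] [FiniteDimensional ℝ H]
    (I : H → ℝ) (hI : ContDiff ℝ 1 I)
    (ρ ν T : ℝ) (hρ : 0 ≤ ρ) (hν : 0 < ν) (hT : 0 < T)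
    (u : ℝ → H) (hu : ContDiff ℝ 2 u)
    (hEDI : ρ / 2 * ‖deriv u T‖ ^ 2 + I (u T)
        + ν / 2 * (∫ s in (0 : ℝ)..T, ‖deriv u s‖ ^ 2)
        + 1 / (2 * ν) * (∫ s in (0 : ℝ)..T, ‖ρ • deriv (deriv u) s + gradient I (u s)‖ ^ 2)
      = ρ / 2 * ‖deriv u 0‖ ^ 2 + I (u 0)) :
    ∀ t ∈ Set.Icc (0 : ℝ) T,
      ρ • deriv (deriv u) t + ν • deriv u t + gradient I (u t) = 0 := by
  have hu2 : ContDiff ℝ (1 + 1) u := by norm_num; exact hu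
  have hudiff : Differentiable ℝ u := hu.differentiable two_ne_zero
  have hu1 : ContDiff ℝ 1 (deriv u) := (contDiff_succ_iff_deriv.mp hu2).2.2
  have hvdiff : Differentiable ℝ (deriv u) := hu1.differentiable one_ne_zero
  have hv_cont : Continuous (deriv u) := hvdiff.continuous
  have ha_cont : Continuous (deriv (deriv u)) := hu1.continuous_deriv le_rfl
  have hIdiff : Differentiable ℝ I := hI.differentiable one_ne_zero
  have hgc : Continuous (fun x => gradient I x) :=
    (InnerProductSpace.toDual ℝ H).symm.continuous.comp (hI.continuous_fderiv one_ne_zero)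
  set g : ℝ → H := fun s => ρ • deriv (deriv u) s + gradient I (u s) with hg_def
  have hg_cont : Continuous g := ((ha_cont.const_smul ρ).add (hgc.comp hu.continuous))
  set E : ℝ → ℝ := fun s => ρ / 2 * ⟪deriv u s, deriv u s⟫ + I (u s) with hE_def
  have hE : ∀ s, HasDerivAt E (⟪g s, deriv u s⟫) s := by
    intro s
    have hvs : HasDerivAt (deriv u) (deriv (deriv u) s) s := (hvdiff s).hasDerivAt
    have hus : HasDerivAt u (deriv u s) s := (hudiff s).hasDerivAt
    have hinner : HasDerivAt (fun t => ⟪deriv u t, deriv u t⟫)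
        (⟪deriv u s, deriv (deriv u) s⟫ + ⟪deriv (deriv u) s, deriv u s⟫) s :=
      hvs.inner ℝ hvs
    have hIu : HasDerivAt (fun t => I (u t)) (⟪gradient I (u s), deriv u s⟫) s := by
      have hg' : HasGradientAt I (gradient I (u s)) (u s) := (hIdiff (u s)).hasGradientAt
      have := hg'.hasFDerivAt.comp_hasDerivAt s hus
      simp only [InnerProductSpace.toDual_apply_apply] at this
      exact this
    have hcomb := (hinner.const_mul (ρ/2)).add hIu
    refine (hcomb : HasDerivAt E _ s).congr_deriv ?_
    simp only [hg_def, inner_add_left, real_inner_smul_left]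
    rw [real_inner_comm (deriv (deriv u) s) (deriv u s)]
    ring
  have hinner_cont : Continuous (fun s => ⟪g s, deriv u s⟫) := hg_cont.inner hv_cont
  have hFTC : (∫ s in (0:ℝ)..T, ⟪g s, deriv u s⟫) = E T - E 0 :=
    intervalIntegral.integral_eq_sub_of_hasDerivAt (fun s _ => hE s)
      (hinner_cont.intervalIntegrable _ _)
  have hpt : ∀ s, ‖g s + ν • deriv u s‖ ^ 2
      = ‖g s‖ ^ 2 + 2 * ν * ⟪g s, deriv u s⟫ + ν ^ 2 * ‖deriv u s‖ ^ 2 := by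
    intro s
    rw [norm_add_sq_real, real_inner_smul_right, norm_smul]
    simp only [Real.norm_eq_abs, mul_pow, sq_abs]
    ring
  have i1 : IntervalIntegrable (fun s => ‖g s‖ ^ 2) volume 0 T :=
    (hg_cont.norm.pow 2).intervalIntegrable _ _
  have i2 : IntervalIntegrable (fun s => 2 * ν * ⟪g s, deriv u s⟫) volume 0 T :=
    ((hinner_cont.const_smul (2*ν)).intervalIntegrable _ _)
  have i3 : IntervalIntegrable (fun s => ν ^ 2 * ‖deriv u s‖ ^ 2) volume 0 T :=
    ((hv_cont.norm.pow 2).const_smul (ν^2)).intervalIntegrable _ _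
  have hsplit : (∫ s in (0:ℝ)..T, ‖g s + ν • deriv u s‖ ^ 2)
      = (∫ s in (0:ℝ)..T, ‖g s‖ ^ 2) + 2 * ν * (E T - E 0)
        + ν ^ 2 * (∫ s in (0:ℝ)..T, ‖deriv u s‖ ^ 2) := by
    have : (∫ s in (0:ℝ)..T, ‖g s + ν • deriv u s‖ ^ 2)
        = ∫ s in (0:ℝ)..T,
          (‖g s‖ ^ 2 + 2 * ν * ⟪g s, deriv u s⟫ + ν ^ 2 * ‖deriv u s‖ ^ 2) := by
      simp only [hpt]
    rw [this, intervalIntegral.integral_add (i1.add i2) i3,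
      intervalIntegral.integral_add i1 i2,
      intervalIntegral.integral_const_mul, intervalIntegral.integral_const_mul, hFTC]
  have hEDI' : E T + ν / 2 * (∫ s in (0:ℝ)..T, ‖deriv u s‖ ^ 2)
      + 1 / (2 * ν) * (∫ s in (0:ℝ)..T, ‖g s‖ ^ 2) = E 0 := by
    simpa [hE_def, hg_def, real_inner_self_eq_norm_sq] using hEDI
  have hzero : (∫ s in (0:ℝ)..T, ‖g s + ν • deriv u s‖ ^ 2) = 0 := by
    rw [hsplit]
    have hν' : ν ≠ 0 := hν.ne'
    field_simp at hEDI'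
    nlinarith [hEDI']
  have hnn : ∀ s, 0 ≤ ‖g s + ν • deriv u s‖ ^ 2 := fun s => by positivity
  have hfc : Continuous (fun s => ‖g s + ν • deriv u s‖ ^ 2) :=
    ((hg_cont.add (hv_cont.const_smul ν)).norm.pow 2)
  have hfinal := aux_eqzero_of_integral_zero hfc hnn hT hzero
  intro t ht
  have h0 : ‖g t + ν • deriv u t‖ ^ 2 = 0 := hfinal t ht
  have h1 : g t + ν • deriv u t = 0 := by
    have := pow_eq_zero_iff (n := 2) (by norm_num) |>.mp h0
    exact norm_eq_zero.mp this
  calc ρ • deriv (deriv u) t + ν • deriv u t + gradient I (u t)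
      = g t + ν • deriv u t := by rw [hg_def]; exact add_right_comm _ _ _
    _ = 0 := h1
end

section
/- Integral bound for the scaled gradient of the cell energy. Let d, n, m be positive integers, let Z ∈ ℝ^{d×n}, and let W : ℝ^{d×n} → ℝ be twice continuously differentiable with W(F) ≥ 0 for all F, W(Z) = 0, and such that there exists c > 0 with ‖DW(F)‖ ≤ c(‖F‖² + 1) for all F ∈ ℝ^{d×n}. Then there exists c' > 0 such that for every δ ∈ (0,1], every measurable set Ω̃ ⊆ ℝ^m of finite Lebesgue measure, and every measurable G : ℝ^m → ℝ^{d×n} with ∫_{Ω̃} ‖G(x)‖² dx < ∞, it holds that ∫_{Ω̃} δ⁻¹ ‖DW(Z + δ·G(x))‖ dx ≤ c' ( |Ω̃| + ∫_{Ω̃} ‖G(x)‖² dx ), where |Ω̃| denotes the Lebesgue measure of Ω̃. -/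
open Matrix MeasureTheory

attribute [local instance] Matrix.frobeniusNormedAddCommGroup Matrix.frobeniusNormedSpace

noncomputable instance matrixFrobeniusOpNorm (d n : ℕ) : Norm (Matrix (Fin d) (Fin n) ℝ →L[ℝ] ℝ) :=
  ContinuousLinearMap.hasOpNorm

/-- Pure real-arithmetic core of the pointwise estimate. -/
lemma cell_energy_aux_arith (K c nz t δ N : ℝ) (hK : 0 ≤ K) (hc : 0 < c)
    (hnz : 0 ≤ nz) (ht : 0 ≤ t) (hN0 : 0 ≤ N) (hδ0 : 0 < δ) (hδ1 : δ ≤ 1)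
    (hcase : (δ * t ≤ 1 ∧ N ≤ K * (δ * t)) ∨ (1 < δ * t ∧ N ≤ c * ((nz + δ * t) ^ 2 + 1))) :
    δ⁻¹ * N ≤ (K + c * (2 * nz ^ 2 + 3) + 1) * (1 + t ^ 2) := by
  rcases hcase with ⟨h1, h2⟩ | ⟨h1, h2⟩
  · have hKt : δ⁻¹ * N ≤ K * t := by
      have heq : K * t = δ⁻¹ * (K * (δ * t)) := by field_simp
      rw [heq]
      exact mul_le_mul_of_nonneg_left h2 (by positivity)
    refine hKt.trans ?_
    nlinarith [mul_nonneg hK ht, mul_nonneg hK (sq_nonneg (t - 1)), sq_nonneg t,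
      sq_nonneg nz, mul_nonneg (mul_nonneg hc.le (sq_nonneg nz)) (sq_nonneg t),
      mul_nonneg hc.le (sq_nonneg t), mul_nonneg hc.le (sq_nonneg nz)]
  · have hst : δ⁻¹ ≤ t := by
      have ht0 : 0 < t := by nlinarith
      rw [inv_le_comm₀ hδ0 ht0]
      have : t⁻¹ * 1 ≤ t⁻¹ * (δ * t) := mul_le_mul_of_nonneg_left h1.le (by positivity)
      calc t⁻¹ = t⁻¹ * 1 := by ring
        _ ≤ t⁻¹ * (δ * t) := this
        _ = δ := by field_simp
    have h3 : δ⁻¹ * N ≤ δ⁻¹ * (c * ((nz + δ * t) ^ 2 + 1)) :=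
      mul_le_mul_of_nonneg_left h2 (by positivity)
    have hexp : δ⁻¹ * (c * ((nz + δ * t) ^ 2 + 1))
        = c * nz ^ 2 * δ⁻¹ + 2 * c * nz * t + c * δ * t ^ 2 + c * δ⁻¹ := by
      field_simp; ring
    rw [hexp] at h3
    refine h3.trans ?_
    have hs0 : 0 < δ⁻¹ := by positivity
    nlinarith [mul_nonneg hK (sq_nonneg t), mul_nonneg hc.le (sq_nonneg (nz - t)),
      mul_nonneg (mul_nonneg hc.le (sq_nonneg nz)) (sq_nonneg (t - 1)),
      mul_nonneg hc.le (sq_nonneg (t - 1)),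
      mul_nonneg (mul_nonneg hc.le (sq_nonneg nz)) ht,
      mul_nonneg hc.le ht, mul_nonneg hc.le (sq_nonneg t),
      mul_le_mul_of_nonneg_left hst (by positivity : (0:ℝ) ≤ c * nz ^ 2),
      mul_le_mul_of_nonneg_left hst hc.le,
      mul_le_mul_of_nonneg_right hδ1 (mul_nonneg hc.le (sq_nonneg t))]

/-- Integral bound for the scaled gradient of the cell energy: under the growth assumptions
on `DW`, there is `c' > 0` such that for every `δ ∈ (0,1]`, every measurable `Ω̃ ⊆ ℝ^m` of
finite Lebesgue measure and every measurable `G` with `∫_{Ω̃} ‖G‖² < ∞`,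
`∫_{Ω̃} δ⁻¹ ‖DW(Z + δ G(x))‖ dx ≤ c' (|Ω̃| + ∫_{Ω̃} ‖G‖² dx)`. -/
theorem cell_energy_scaled_gradient_integral_bound
    (d n m : ℕ) (hd : 0 < d) (hn : 0 < n) (hm : 0 < m)
    (Z : Matrix (Fin d) (Fin n) ℝ) (W : Matrix (Fin d) (Fin n) ℝ → ℝ)
    (hW : ContDiff ℝ 2 W)
    (hWnonneg : ∀ F : Matrix (Fin d) (Fin n) ℝ, 0 ≤ W F)
    (hWZ : W Z = 0)
    (c : ℝ) (hc : 0 < c)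
    (hgrowth : ∀ F : Matrix (Fin d) (Fin n) ℝ, ‖fderiv ℝ W F‖ ≤ c * (‖F‖ ^ 2 + 1)) :
    ∃ c' > (0 : ℝ), ∀ δ ∈ Set.Ioc (0 : ℝ) 1,
      ∀ Ω : Set (EuclideanSpace ℝ (Fin m)), MeasurableSet Ω → volume Ω < ⊤ →
      ∀ G : EuclideanSpace ℝ (Fin m) → Matrix (Fin d) (Fin n) ℝ, MeasureTheory.StronglyMeasurable G →
        IntegrableOn (fun x => ‖G x‖ ^ 2) Ω volume →
        (∫ x in Ω, δ⁻¹ * ‖fderiv ℝ W (Z + δ • G x)‖)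
          ≤ c' * ((volume Ω).toReal + ∫ x in Ω, ‖G x‖ ^ 2) := by
  classical
  letI : NormedAddCommGroup (Matrix (Fin d) (Fin n) ℝ →L[ℝ] ℝ) :=
    ContinuousLinearMap.toNormedAddCommGroup
  letI : NormedSpace ℝ (Matrix (Fin d) (Fin n) ℝ →L[ℝ] ℝ) :=
    ContinuousLinearMap.toNormedSpace
  letI : NormedAddCommGroup
      (Matrix (Fin d) (Fin n) ℝ →L[ℝ] Matrix (Fin d) (Fin n) ℝ →L[ℝ] ℝ) :=
    ContinuousLinearMap.toNormedAddCommGroup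
  -- derivative vanishes at the minimum
  have hfZ : fderiv ℝ W Z = 0 := by
    have hmin : IsLocalMin W Z :=
      Filter.Eventually.of_forall (fun y => by rw [hWZ]; exact hWnonneg y)
    exact hmin.fderiv_eq_zero
  have hf1 : ContDiff ℝ 1 (fderiv ℝ W) := hW.fderiv_right (by norm_num)
  have hcontd : Continuous (fderiv ℝ (fderiv ℝ W)) := hf1.continuous_fderiv one_ne_zero
  obtain ⟨K0, hK0⟩ := (isCompact_closedBall Z 1).exists_bound_of_continuousOn
    hcontd.continuousOn
  have hK : (0:ℝ) ≤ max K0 0 := le_max_right _ _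
  have hlip : ∀ y ∈ Metric.closedBall Z 1,
      ‖fderiv ℝ W y - fderiv ℝ W Z‖ ≤ max K0 0 * ‖y - Z‖ := fun y hy =>
    (convex_closedBall Z 1).norm_image_sub_le_of_norm_fderiv_le
      (fun x _ => (hf1.differentiable one_ne_zero).differentiableAt)
      (fun x hx => (hK0 x hx).trans (le_max_left _ _))
      (Metric.mem_closedBall_self zero_le_one) hy
  refine ⟨max K0 0 + c * (2 * ‖Z‖ ^ 2 + 3) + 1, by positivity, ?_⟩
  intro δ hδ Ω hΩmeas hΩfin G hG hGint
  obtain ⟨hδ0, hδ1⟩ := hδ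
  -- pointwise bound
  have key : ∀ A : Matrix (Fin d) (Fin n) ℝ,
      δ⁻¹ * ‖fderiv ℝ W (Z + δ • A)‖
        ≤ (max K0 0 + c * (2 * ‖Z‖ ^ 2 + 3) + 1) * (1 + ‖A‖ ^ 2) := by
    intro A
    have hsm : ‖δ • A‖ = δ * ‖A‖ := by
      rw [norm_smul, Real.norm_eq_abs, abs_of_pos hδ0]
    refine cell_energy_aux_arith _ c ‖Z‖ ‖A‖ δ _ hK hc (norm_nonneg _) (norm_nonneg _)
      (norm_nonneg _) hδ0 hδ1 ?_
    by_cases h1 : δ * ‖A‖ ≤ 1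
    · refine Or.inl ⟨h1, ?_⟩
      have hmem : Z + δ • A ∈ Metric.closedBall Z 1 := by
        rw [Metric.mem_closedBall, dist_eq_norm, add_sub_cancel_left, hsm]
        exact h1
      have hb := hlip _ hmem
      rwa [hfZ, sub_zero, add_sub_cancel_left, hsm] at hb
    · push_neg at h1
      refine Or.inr ⟨h1, ?_⟩
      refine (hgrowth _).trans ?_
      have hM : ‖Z + δ • A‖ ≤ ‖Z‖ + δ * ‖A‖ := by
        calc ‖Z + δ • A‖ ≤ ‖Z‖ + ‖δ • A‖ := norm_add_le _ _
          _ = ‖Z‖ + δ * ‖A‖ := by rw [hsm]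
      have h0 : (0:ℝ) ≤ ‖Z + δ • A‖ := norm_nonneg _
      have hsq : ‖Z + δ • A‖ ^ 2 ≤ (‖Z‖ + δ * ‖A‖) ^ 2 := by nlinarith
      nlinarith [mul_le_mul_of_nonneg_left hsq hc.le]
  -- integrate the pointwise bound
  have hconst : IntegrableOn (fun _ : EuclideanSpace ℝ (Fin m) => (1:ℝ)) Ω volume :=
    integrableOn_const hΩfin.ne
  have hgint : Integrable
      (fun x => (max K0 0 + c * (2 * ‖Z‖ ^ 2 + 3) + 1) * (1 + ‖G x‖ ^ 2))
      (volume.restrict Ω) :=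
    ((hconst.add hGint)).const_mul _
  have hmono :
      (∫ x in Ω, δ⁻¹ * ‖fderiv ℝ W (Z + δ • G x)‖)
        ≤ ∫ x in Ω, (max K0 0 + c * (2 * ‖Z‖ ^ 2 + 3) + 1) * (1 + ‖G x‖ ^ 2) := by
    refine integral_mono_of_nonneg ?_ hgint ?_
    · exact Filter.Eventually.of_forall (fun x => by positivity)
    · exact Filter.Eventually.of_forall (fun x => key (G x))
  refine hmono.trans (le_of_eq ?_)
  rw [integral_const_mul, integral_add hconst hGint, setIntegral_const]
  simp [smul_eq_mul, measureReal_def]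
end
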